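/- arXiv:2112.01355 — 9 statements merged into one kernel-verified Lean document; each statement's English description precedes it below -/
import Mathlib

section
/- For all r ∈ (r_e, r_c) one has h(r) < 0, where h(r) := 2μ(r)·(d/dr)(r·μ'(r) − 4μ(r)) − μ'(r)·(r·μ'(r) − 4μ(r)). -/
/-- A cubic polynomial vanishing at four distinct points has all coefficients zero. -/
lemma cubic_aux (c3 c2 c1 c0 x1 x2 x3 x4 : ℝ)
    (h12 : x1 ≠ x2) (h13 : x1 ≠ x3) (h14 : x1 ≠ x4)
    (h23 : x2 ≠ x3) (h24 : x2 ≠ x4) (h34 : x3 ≠ x4)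
    (e1 : c3*x1^3 + c2*x1^2 + c1*x1 + c0 = 0)
    (e2 : c3*x2^3 + c2*x2^2 + c1*x2 + c0 = 0)
    (e3 : c3*x3^3 + c2*x3^2 + c1*x3 + c0 = 0)
    (e4 : c3*x4^3 + c2*x4^2 + c1*x4 + c0 = 0) :
    c3 = 0 ∧ c2 = 0 ∧ c1 = 0 ∧ c0 = 0 := by
  have d12 : c3*(x1^2+x1*x2+x2^2) + c2*(x1+x2) + c1 = 0 := by
    have hd : (x1 - x2) * (c3*(x1^2+x1*x2+x2^2) + c2*(x1+x2) + c1) = 0 := by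
      linear_combination e1 - e2
    exact (mul_eq_zero.1 hd).resolve_left (sub_ne_zero.2 h12)
  have d13 : c3*(x1^2+x1*x3+x3^2) + c2*(x1+x3) + c1 = 0 := by
    have hd : (x1 - x3) * (c3*(x1^2+x1*x3+x3^2) + c2*(x1+x3) + c1) = 0 := by
      linear_combination e1 - e3
    exact (mul_eq_zero.1 hd).resolve_left (sub_ne_zero.2 h13)
  have d14 : c3*(x1^2+x1*x4+x4^2) + c2*(x1+x4) + c1 = 0 := by
    have hd : (x1 - x4) * (c3*(x1^2+x1*x4+x4^2) + c2*(x1+x4) + c1) = 0 := by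
      linear_combination e1 - e4
    exact (mul_eq_zero.1 hd).resolve_left (sub_ne_zero.2 h14)
  have f3 : c3*(x1+x2+x3) + c2 = 0 := by
    have hd : (x2 - x3) * (c3*(x1+x2+x3) + c2) = 0 := by
      linear_combination d12 - d13
    exact (mul_eq_zero.1 hd).resolve_left (sub_ne_zero.2 h23)
  have f4 : c3*(x1+x2+x4) + c2 = 0 := by
    have hd : (x2 - x4) * (c3*(x1+x2+x4) + c2) = 0 := by
      linear_combination d12 - d14
    exact (mul_eq_zero.1 hd).resolve_left (sub_ne_zero.2 h24)
  have g3 : c3 = 0 := by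
    have hd : (x3 - x4) * c3 = 0 := by linear_combination f3 - f4
    exact (mul_eq_zero.1 hd).resolve_left (sub_ne_zero.2 h34)
  have g2 : c2 = 0 := by linear_combination f3 - (x1+x2+x3)*g3
  have g1 : c1 = 0 := by
    linear_combination d12 - (x1^2+x1*x2+x2^2)*g3 - (x1+x2)*g2
  have g0 : c0 = 0 := by linear_combination e1 - x1^3*g3 - x1^2*g2 - x1*g1
  exact ⟨g3, g2, g1, g0⟩

/-- If T > 0 then the elementary symmetric sum is positive. -/
lemma pos_e1 (x1 x2 x3 y : ℝ) (h1 : 0 < x1) (h2 : 0 < x2) (h3 : 0 < x3) (hy : 0 < y)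
    (hT : 0 < (x1+x2+x3-y)^3
      - 4*(x1+x2+x3-y)*((x1*x2+x1*x3+x2*x3) - y*(x1+x2+x3))
      + 8*(x1*x2*x3 - y*(x1*x2+x1*x3+x2*x3))) :
    0 < x1+x2+x3-y := by
  by_contra hle
  push_neg at hle
  have hyp : 0 ≤ y - (x1+x2+x3) := by linarith
  have hp : (0:ℝ) ≤ x1+x2+x3 := by linarith
  have hq : (0:ℝ) ≤ x1*x2+x1*x3+x2*x3 := by positivity
  have he2 : (x1*x2+x1*x3+x2*x3) - y*(x1+x2+x3) < 0 := by
    nlinarith [mul_nonneg hyp hp, sq_nonneg x1, sq_nonneg x2, sq_nonneg x3,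
      mul_pos h1 h2, mul_pos h1 h3, mul_pos h2 h3]
  have he3 : x1*x2*x3 - y*(x1*x2+x1*x3+x2*x3) < 0 := by
    nlinarith [mul_nonneg hyp hq, mul_pos (mul_pos h1 h2) h3,
      mul_pos (mul_pos h1 h1) h2, mul_pos (mul_pos h1 h1) h3,
      mul_pos (mul_pos h2 h2) h1, mul_pos (mul_pos h2 h2) h3,
      mul_pos (mul_pos h3 h3) h1, mul_pos (mul_pos h3 h3) h2]
  have t1 : (x1+x2+x3-y)^3 ≤ 0 := by
    nlinarith [mul_nonpos_of_nonpos_of_nonneg hle (sq_nonneg (x1+x2+x3-y))]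
  have t2 : 0 ≤ (x1+x2+x3-y) * ((x1*x2+x1*x3+x2*x3) - y*(x1+x2+x3)) := by
    nlinarith [mul_nonneg (neg_nonneg.2 hle) (neg_nonneg.2 he2.le)]
  linarith

/-- Core positivity certificate. -/
lemma core_pos (r c u v y : ℝ) (hr : 0 < r) (hc : 0 < c) (hu : 0 < u) (hv : 0 < v)
    (hy : 0 < y) :
    0 < 4*r*(y*u*(u+v))^2 + (6*c*u^2*v^2*y^2 + 2*c*u^2*v^3*y + 12*c*u^3*v*y^2 + 8*c*u^3*v^2*y + 6*c*u^4*y^2 + 10*c*u^4*v*y + 4*c*u^5*y + 6*c^2*u*v*y^3 + 12*c^2*u*v^2*y^2 + 6*c^2*u*v^3*y + 6*c^2*u^2*y^3 + 36*c^2*u^2*v*y^2 + 27*c^2*u^2*v^2*y + c^2*u^2*v^3 + 24*c^2*u^3*y^2 + 42*c^2*u^3*v*y + 4*c^2*u^3*v^2 + 21*c^2*u^4*y + 5*c^2*u^4*v + 2*c^2*u^5 + 4*c^3*v*y^3 + 8*c^3*v^2*y^2 + 4*c^3*v^3*y + 8*c^3*u*y^3 + 38*c^3*u*v*y^2 + 32*c^3*u*v^2*y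 + 2*c^3*u*v^3 + 38*c^3*u^2*y^2 + 72*c^3*u^2*v*y + 13*c^3*u^2*v^2 + 48*c^3*u^3*y + 22*c^3*u^3*v + 11*c^3*u^4 + 3*c^4*y^3 + 15*c^4*v*y^2 + 13*c^4*v^2*y + c^4*v^3 + 30*c^4*u*y^2 + 58*c^4*u*v*y + 14*c^4*u*v^2 + 58*c^4*u^2*y + 36*c^4*u^2*v + 24*c^4*u^3 + 9*c^5*y^2 + 18*c^5*v*y + 5*c^5*v^2 + 36*c^5*u*y + 26*c^5*u*v + 26*c^5*u^2 + 9*c^6*y + 7*c^6*v + 14*c^6*u + 3*c^7) := by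
  positivity

/-- Value of h for a quartic with explicit coefficients. -/
lemma hform0 (μ : ℝ → ℝ) (A B C D : ℝ) (hf : ∀ s, μ s = -A*s^4 + B*s^2 + C*s + D) (r : ℝ) :
    2 * μ r * deriv (fun s => s * deriv μ s - 4 * μ s) r
      - deriv μ r * (r * deriv μ r - 4 * μ r)
      = 2 * (-A*r^4 + B*r^2 + C*r + D) * (-(2*B)*(2*r) - 3*C)
        - (-A*(4*r^3) + B*(2*r) + C)
          * (r * (-A*(4*r^3) + B*(2*r) + C) - 4 * (-A*r^4 + B*r^2 + C*r + D)) := by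
  have hpoly : ∀ x : ℝ, HasDerivAt (fun s : ℝ => -A*s^4 + B*s^2 + C*s + D)
      (-A*(4*x^3) + B*(2*x) + C) x := by
    intro x
    have hh := ((((hasDerivAt_pow 4 x).const_mul (-A)).add
      ((hasDerivAt_pow 2 x).const_mul B)).add
      ((hasDerivAt_id x).const_mul C)).add_const D
    simpa using hh
  have hd : ∀ x : ℝ, HasDerivAt μ (-A*(4*x^3) + B*(2*x) + C) x := by
    intro x
    exact (hpoly x).congr_of_eventuallyEq (Filter.Eventually.of_forall hf)
  have hdμ : deriv μ = fun x => -A*(4*x^3) + B*(2*x) + C := funext fun x => (hd x).deriv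
  simp only [hdμ]
  have hg : (fun s : ℝ => s * (-A*(4*s^3) + B*(2*s) + C) - 4 * μ s)
      = fun s : ℝ => -(2*B)*s^2 - 3*C*s - 4*D := by
    funext s
    rw [hf s]
    ring
  rw [hg]
  have hdg : HasDerivAt (fun s : ℝ => -(2*B)*s^2 - 3*C*s - 4*D) (-(2*B)*(2*r) - 3*C) r := by
    have hh := (((hasDerivAt_pow 2 r).const_mul (-(2*B))).sub
      ((hasDerivAt_id r).const_mul (3*C))).sub_const (4*D)
    simpa using hh
  rw [hdg.deriv, hf r]

set_option maxHeartbeats 2000000 in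
/-- For subextremal Kerr-de Sitter parameters, the function
`h(r) = 2μ(r)·(d/dr)(r·μ'(r) − 4μ(r)) − μ'(r)·(r·μ'(r) − 4μ(r))` is negative on `(r_e, r_c)`. -/
theorem stmt_0 (Λ m a : ℝ) (hΛ : 0 < Λ) (hm : 0 < m)
    (μ : ℝ → ℝ) (hμ : ∀ r, μ r = (r ^ 2 + a ^ 2) * (1 - Λ * r ^ 2 / 3) - 2 * m * r)
    (h : ℝ → ℝ)
    (hh : ∀ r, h r = 2 * μ r * deriv (fun s => s * deriv μ s - 4 * μ s) r
      - deriv μ r * (r * deriv μ r - 4 * μ r))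
    (rneg rC re rc : ℝ) (h1 : rneg < rC) (h2 : rC < re) (h3 : re < rc)
    (hr1 : μ rneg = 0) (hr2 : μ rC = 0) (hr3 : μ re = 0) (hr4 : μ rc = 0) :
    ∀ r ∈ Set.Ioo re rc, h r < 0 := by
  -- coefficient identities from the four roots
  have E1 : (-(Λ/3)*(rneg+rC+re+rc))*rneg^3 + (1 - (Λ/3)*a^2 + (Λ/3)*(rneg*rC+rneg*re+rneg*rc+rC*re+rC*rc+re*rc))*rneg^2 + (-2*m - (Λ/3)*(rneg*rC*re+rneg*rC*rc+rneg*re*rc+rC*re*rc))*rneg + (a^2 + (Λ/3)*(rneg*rC*re*rc)) = 0 := by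
    linear_combination hr1 - hμ rneg
  have E2 : (-(Λ/3)*(rneg+rC+re+rc))*rC^3 + (1 - (Λ/3)*a^2 + (Λ/3)*(rneg*rC+rneg*re+rneg*rc+rC*re+rC*rc+re*rc))*rC^2 + (-2*m - (Λ/3)*(rneg*rC*re+rneg*rC*rc+rneg*re*rc+rC*re*rc))*rC + (a^2 + (Λ/3)*(rneg*rC*re*rc)) = 0 := by
    linear_combination hr2 - hμ rC
  have E3 : (-(Λ/3)*(rneg+rC+re+rc))*re^3 + (1 - (Λ/3)*a^2 + (Λ/3)*(rneg*rC+rneg*re+rneg*rc+rC*re+rC*rc+re*rc))*re^2 + (-2*m - (Λ/3)*(rneg*rC*re+rneg*rC*rc+rneg*re*rc+rC*re*rc))*re + (a^2 + (Λ/3)*(rneg*rC*re*rc)) = 0 := by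
    linear_combination hr3 - hμ re
  have E4 : (-(Λ/3)*(rneg+rC+re+rc))*rc^3 + (1 - (Λ/3)*a^2 + (Λ/3)*(rneg*rC+rneg*re+rneg*rc+rC*re+rC*rc+re*rc))*rc^2 + (-2*m - (Λ/3)*(rneg*rC*re+rneg*rC*rc+rneg*re*rc+rC*re*rc))*rc + (a^2 + (Λ/3)*(rneg*rC*re*rc)) = 0 := by
    linear_combination hr4 - hμ rc
  obtain ⟨hc3, hc2, hc1, hc0⟩ := cubic_aux _ _ _ _ rneg rC re rc
    (ne_of_lt h1) (ne_of_lt (h1.trans h2)) (ne_of_lt ((h1.trans h2).trans h3))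
    (ne_of_lt h2) (ne_of_lt (h2.trans h3)) (ne_of_lt h3) E1 E2 E3 E4
  have hΛ0 : Λ ≠ 0 := ne_of_gt hΛ
  have hsum0 : Λ * (rneg + rC + re + rc) = 0 := by linear_combination (-3 : ℝ) * hc3
  have hsum : rneg + rC + re + rc = 0 := (mul_eq_zero.1 hsum0).resolve_left hΛ0
  have hrneg : rneg = -(rC+re+rc) := by linarith
  subst hrneg
  intro r hr
  obtain ⟨hre, hrc⟩ := hr
  -- basic positivity facts
  have hx1 : 0 < r + (rC+re+rc) := by linarith
  have hx2 : 0 < r - rC := by linarith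
  have hx3 : 0 < r - re := by linarith
  have hy : 0 < rc - r := by linarith
  have hu : 0 < re - rC := by linarith
  have hv : 0 < 2*rC+re+rc := by linarith
  -- S3 < 0 from m > 0
  have hS3lt : rC*re*rc - (rC+re+rc)*(rC*re+rC*rc+re*rc) < 0 := by
    nlinarith [hc1, hΛ, hm]
  -- r > 0
  have hT : 0 < ((r+(rC+re+rc))+(r-rC)+(r-re)-(rc-r))^3
      - 4*((r+(rC+re+rc))+(r-rC)+(r-re)-(rc-r))*(((r+(rC+re+rc))*(r-rC)+(r+(rC+re+rc))*(r-re)+(r-rC)*(r-re)) - (rc-r)*((r+(rC+re+rc))+(r-rC)+(r-re)))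
      + 8*((r+(rC+re+rc))*(r-rC)*(r-re) - (rc-r)*((r+(rC+re+rc))*(r-rC)+(r+(rC+re+rc))*(r-re)+(r-rC)*(r-re))) := by
    linarith [hS3lt]
  have h4r := pos_e1 _ _ _ _ hx1 hx2 hx3 hy hT
  have hr0 : 0 < r := by nlinarith [h4r]
  -- the factored form of μ
  have hf2 : ∀ s, μ s = -(Λ/3)*s^4
      + ((Λ/3)*((rC+re+rc)^2 - (rC*re+rC*rc+re*rc)))*s^2
      + ((Λ/3)*(rC*re*rc - (rC+re+rc)*(rC*re+rC*rc+re*rc)))*s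
      + ((Λ/3)*((rC+re+rc)*(rC*re*rc))) := by
    intro s
    linear_combination hμ s + s^2*hc2 + s*hc1 + hc0
  -- certificate
  have hcore := core_pos r (r-re) (re-rC) (2*rC+re+rc) (rc-r) hr0 hx3 hu hv hy
  have hk : (0:ℝ) < Λ^2/36 := by positivity
  have hEq : h r = -(Λ^2/36) * (4*r*((rc-r)*(re-rC)*((re-rC)+(2*rC+re+rc)))^2 + (6*(r-re)*(re-rC)^2*(2*rC+re+rc)^2*(rc-r)^2 + 2*(r-re)*(re-rC)^2*(2*rC+re+rc)^3*(rc-r) + 12*(r-re)*(re-rC)^3*(2*rC+re+rc)*(rc-r)^2 + 8*(r-re)*(re-rC)^3*(2*rC+re+rc)^2*(rc-r) + 6*(r-re)*(re-rC)^4*(rc-r)^2 + 10*(r-re)*(re-rC)^4*(2*rC+re+rc)*(rc-r) + 4*(r-re)*(re-rC)^5*(rc-r) + 6*(r-re)^2*(re-rC)*(2*rC+re+rc)*(rc-r)^3 + 12*(r-re)^2*(re-rC)*(2*rC+re+rc)^2*(rc-r)^2 + 6*(r-re)^2*(re-rC)*(2*rC+re+rc)^3*(rc-r) + 6*(r-re)^2*(re-rC)^2*(rc-r)^3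 + 36*(r-re)^2*(re-rC)^2*(2*rC+re+rc)*(rc-r)^2 + 27*(r-re)^2*(re-rC)^2*(2*rC+re+rc)^2*(rc-r) + (r-re)^2*(re-rC)^2*(2*rC+re+rc)^3 + 24*(r-re)^2*(re-rC)^3*(rc-r)^2 + 42*(r-re)^2*(re-rC)^3*(2*rC+re+rc)*(rc-r) + 4*(r-re)^2*(re-rC)^3*(2*rC+re+rc)^2 + 21*(r-re)^2*(re-rC)^4*(rc-r) + 5*(r-re)^2*(re-rC)^4*(2*rC+re+rc) + 2*(r-re)^2*(re-rC)^5 + 4*(r-re)^3*(2*rC+re+rc)*(rc-r)^3 + 8*(r-re)^3*(2*rC+re+rc)^2*(rc-r)^2 + 4*(r-re)^3*(2*rC+re+rc)^3*(rc-r) + 8*(r-re)^3*(re-rC)*(rc-r)^3 + 38*(r-re)^3*(re-rC)*(2*rC+re+rc)*(rc-r)^2 + 32*(r-re)^3*(re-rC)*(2*rC+re+rc)^2*(rc-r) + 2*(r-re)^3*(re-rC)*(2*rC+re+rc)^3 + 38*(r-re)^3*(re-rC)^2*(rc-r)^2 + 72*(r-re)^3*(re-rC)^2*(2*rC+re+rc)*(rc-r)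 + 13*(r-re)^3*(re-rC)^2*(2*rC+re+rc)^2 + 48*(r-re)^3*(re-rC)^3*(rc-r) + 22*(r-re)^3*(re-rC)^3*(2*rC+re+rc) + 11*(r-re)^3*(re-rC)^4 + 3*(r-re)^4*(rc-r)^3 + 15*(r-re)^4*(2*rC+re+rc)*(rc-r)^2 + 13*(r-re)^4*(2*rC+re+rc)^2*(rc-r) + (r-re)^4*(2*rC+re+rc)^3 + 30*(r-re)^4*(re-rC)*(rc-r)^2 + 58*(r-re)^4*(re-rC)*(2*rC+re+rc)*(rc-r) + 14*(r-re)^4*(re-rC)*(2*rC+re+rc)^2 + 58*(r-re)^4*(re-rC)^2*(rc-r) + 36*(r-re)^4*(re-rC)^2*(2*rC+re+rc) + 24*(r-re)^4*(re-rC)^3 + 9*(r-re)^5*(rc-r)^2 + 18*(r-re)^5*(2*rC+re+rc)*(rc-r) + 5*(r-re)^5*(2*rC+re+rc)^2 + 36*(r-re)^5*(re-rC)*(rc-r) + 26*(r-re)^5*(re-rC)*(2*rC+re+rc) + 26*(r-re)^5*(re-rC)^2 + 9*(r-re)^6*(rc-r) + 7*(r-re)^6*(2*rC+re+rc) + 14*(r-re)^6*(re-rC)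 + 3*(r-re)^7)) := by
    rw [hh r, hform0 μ (Λ/3) ((Λ/3)*((rC+re+rc)^2 - (rC*re+rC*rc+re*rc)))
      ((Λ/3)*(rC*re*rc - (rC+re+rc)*(rC*re+rC*rc+re*rc)))
      ((Λ/3)*((rC+re+rc)*(rC*re*rc))) hf2 r]
    ring
  rw [hEq]
  exact mul_neg_of_neg_of_pos (neg_lt_zero.2 hk) hcore
end

section
/- Given a ∈ ℝ and m > 0, there exist real numbers Λ₀ ≤ Λ₁ such that for every Λ ≥ 0 the discriminant condition holds if and only if Λ₀ < Λ < Λ₁ (in particular, the set of Λ ≥ 0 satisfying the discriminant condition is an interval, possibly empty). -/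
/-- Given `a` and `m > 0`, the set of `Λ ≥ 0` satisfying the discriminant
condition is of the form `(Λ₀, Λ₁)` for some `Λ₀ ≤ Λ₁`. -/
theorem stmt_4 (a m : ℝ) (hm : 0 < m) :
    ∃ Λ₀ Λ₁ : ℝ, Λ₀ ≤ Λ₁ ∧ ∀ Λ : ℝ, 0 ≤ Λ →
      (- (1 + Λ * a ^ 2 / 3) ^ 4 * (a / m) ^ 2 + 12 * (1 - Λ * a ^ 2 / 3) * Λ * a ^ 2
        + (1 - Λ * a ^ 2 / 3) ^ 3 - 9 * Λ * m ^ 2 > 0 ↔ Λ₀ < Λ ∧ Λ < Λ₁) := by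
  have hm' : m ≠ 0 := ne_of_gt hm
  obtain ⟨k, hk⟩ : ∃ k : ℝ, k = (a / m) ^ 2 := ⟨_, rfl⟩
  obtain ⟨s, hs⟩ : ∃ s : ℝ, s = a ^ 2 / 3 := ⟨_, rfl⟩
  have hk0 : 0 ≤ k := hk ▸ sq_nonneg _
  have hs0 : 0 ≤ s := by rw [hs]; positivity
  obtain ⟨A, hA⟩ : ∃ A : ℝ, A = 1 - k := ⟨_, rfl⟩
  obtain ⟨B, hB⟩ : ∃ B : ℝ, B = -4 * k * s + 12 * a ^ 2 - 3 * s - 9 * m ^ 2 := ⟨_, rfl⟩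
  obtain ⟨C, hCe⟩ : ∃ C : ℝ, C = -6 * k * s ^ 2 - 12 * a ^ 2 * s + 3 * s ^ 2 := ⟨_, rfl⟩
  obtain ⟨D, hDe⟩ : ∃ D : ℝ, D = -4 * k * s ^ 3 - s ^ 3 := ⟨_, rfl⟩
  obtain ⟨E, hEe⟩ : ∃ E : ℝ, E = -k * s ^ 4 := ⟨_, rfl⟩
  set F : ℝ → ℝ := fun Λ => A + B * Λ + C * Λ ^ 2 + D * Λ ^ 3 + E * Λ ^ 4 with hF
  have hFeq : ∀ Λ : ℝ,
      - (1 + Λ * a ^ 2 / 3) ^ 4 * (a / m) ^ 2 + 12 * (1 - Λ * a ^ 2 / 3) * Λ * a ^ 2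
        + (1 - Λ * a ^ 2 / 3) ^ 3 - 9 * Λ * m ^ 2 = F Λ := by
    intro Λ; simp only [hF, hA, hB, hCe, hDe, hEe, hk, hs]; ring
  -- coefficient signs
  have hC : C ≤ 0 := by
    rw [hCe, hs]; nlinarith [mul_nonneg hk0 (sq_nonneg (a ^ 2 / 3)), sq_nonneg a, sq_nonneg (a^2)]
  have hD : D ≤ 0 := by
    rw [hDe]
    have h3 : (0:ℝ) ≤ s ^ 3 := by positivity
    nlinarith [mul_nonneg hk0 h3]
  have hE : E ≤ 0 := by
    rw [hEe]
    have h4 : (0:ℝ) ≤ s ^ 4 := by positivity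
    nlinarith [mul_nonneg hk0 h4]
  -- F is continuous
  have hcont : Continuous F := by fun_prop
  -- F is concave on Ici 0
  have hconc : ConcaveOn ℝ (Set.Ici (0:ℝ)) F := by
    apply concaveOn_of_hasDerivWithinAt2_nonpos (convex_Ici 0) hcont.continuousOn
      (f' := fun x => B + 2 * C * x + 3 * D * x ^ 2 + 4 * E * x ^ 3)
      (f'' := fun x => 2 * C + 6 * D * x + 12 * E * x ^ 2)
    · intro x hx
      have h : HasDerivAt F (B + 2 * C * x + 3 * D * x ^ 2 + 4 * E * x ^ 3) x := by
        have h0 : HasDerivAt F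
            (0 + B * 1 + C * (2 * x ^ 1) + D * (3 * x ^ 2) + E * (4 * x ^ 3)) x :=
          ((((hasDerivAt_const x A).add ((hasDerivAt_id x).const_mul B)).add
            ((hasDerivAt_pow 2 x).const_mul C)).add ((hasDerivAt_pow 3 x).const_mul D)).add
            ((hasDerivAt_pow 4 x).const_mul E)
        convert h0 using 1; ring
      exact h.hasDerivWithinAt
    · intro x hx
      have h : HasDerivAt (fun x : ℝ => B + 2 * C * x + 3 * D * x ^ 2 + 4 * E * x ^ 3)
          (2 * C + 6 * D * x + 12 * E * x ^ 2) x := by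
        have h0 : HasDerivAt (fun x : ℝ => B + 2 * C * x + 3 * D * x ^ 2 + 4 * E * x ^ 3)
            (0 + 2 * C * 1 + 3 * D * (2 * x ^ 1) + 4 * E * (3 * x ^ 2)) x :=
          (((hasDerivAt_const x B).add ((hasDerivAt_id x).const_mul (2 * C))).add
            ((hasDerivAt_pow 2 x).const_mul (3 * D))).add
            ((hasDerivAt_pow 3 x).const_mul (4 * E))
        convert h0 using 1; ring
      exact h.hasDerivWithinAt
    · intro x hx
      rw [interior_Ici] at hx
      have hx0 : (0:ℝ) ≤ x := le_of_lt hx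
      nlinarith [mul_nonpos_of_nonpos_of_nonneg hD hx0,
        mul_nonpos_of_nonpos_of_nonneg hE (sq_nonneg x)]
  -- the superlevel set
  set S : Set ℝ := {x ∈ Set.Ici (0:ℝ) | 0 < F x} with hSdef
  have hSconv : Convex ℝ S := hconc.convex_gt 0
  have hSord := hSconv.ordConnected
  -- upper bound on S
  have hSbd : ∀ x ∈ S, x ≤ 10 / (9 * m ^ 2) := by
    intro x hx
    obtain ⟨hx0, hxF⟩ := hx
    simp only [Set.mem_Ici] at hx0
    have key : F x ≤ 10 - 9 * m ^ 2 * x := by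
      have h1 := hFeq x
      have hX : (0:ℝ) ≤ x * a ^ 2 / 3 := by positivity
      rw [← h1]
      nlinarith [sq_nonneg (2 * (x * a ^ 2 / 3) - 1),
        mul_nonneg (sq_nonneg (a/m)) (sq_nonneg ((1 + x * a ^ 2 / 3) ^ 2)),
        mul_nonneg hX (sq_nonneg (x * a ^ 2 / 3 - 3/2))]
    have h2 : 0 < 10 - 9 * m ^ 2 * x := lt_of_lt_of_le hxF key
    rw [le_div_iff₀ (by positivity)]
    nlinarith
  have hbddA : BddAbove S := ⟨10 / (9 * m ^ 2), fun x hx => hSbd x hx⟩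
  have hbddB : BddBelow S := ⟨0, fun x hx => hx.1⟩
  have hopen : IsOpen {x : ℝ | 0 < F x} := isOpen_lt continuous_const hcont
  by_cases hne : S.Nonempty
  · by_cases h0 : 0 < F 0
    · -- 0 ∈ S
      have h0S : (0:ℝ) ∈ S := ⟨Set.self_mem_Ici, h0⟩
      refine ⟨-1, sSup S, by linarith [le_csSup hbddA h0S], fun Λ hΛ => ?_⟩
      rw [hFeq]
      constructor
      · intro hFΛ
        obtain ⟨ε, hε, hball⟩ := Metric.isOpen_iff.mp hopen Λ hFΛ
        have hmem : Λ + ε / 2 ∈ S := by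
          refine ⟨Set.mem_Ici.mpr (by linarith), hball ?_⟩
          rw [Metric.mem_ball, Real.dist_eq]
          have he : Λ + ε / 2 - Λ = ε / 2 := by ring
          rw [he, abs_of_nonneg (by linarith)]; linarith
        exact ⟨by linarith, lt_of_lt_of_le (by linarith) (le_csSup hbddA hmem)⟩
      · rintro ⟨-, hlt⟩
        obtain ⟨y, hyS, hΛy⟩ := exists_lt_of_lt_csSup hne hlt
        exact (hSord.out h0S hyS ⟨hΛ, le_of_lt hΛy⟩).2
    · -- 0 ∉ S
      have hpos : ∀ x ∈ S, 0 < x := by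
        intro x hx
        rcases lt_or_eq_of_le (Set.mem_Ici.mp hx.1) with h | h
        · exact h
        · exact absurd (h ▸ hx.2) h0
      refine ⟨sInf S, sSup S, csInf_le_csSup hne hbddB hbddA, fun Λ hΛ => ?_⟩
      rw [hFeq]
      constructor
      · intro hFΛ
        have hΛS : Λ ∈ S := ⟨Set.mem_Ici.mpr hΛ, hFΛ⟩
        have hΛ0 : 0 < Λ := hpos Λ hΛS
        obtain ⟨ε, hε, hball⟩ := Metric.isOpen_iff.mp hopen Λ hFΛ
        set δ : ℝ := min (ε / 2) (Λ / 2) with hδ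
        have hδ0 : 0 < δ := lt_min (by linarith) (by linarith)
        have hδε : δ < ε := lt_of_le_of_lt (min_le_left _ _) (by linarith)
        have hδΛ : δ ≤ Λ / 2 := min_le_right _ _
        have hmem1 : Λ - δ ∈ S := by
          refine ⟨Set.mem_Ici.mpr (by linarith), hball ?_⟩
          rw [Metric.mem_ball, Real.dist_eq]
          have he : Λ - δ - Λ = -δ := by ring
          rw [he, abs_neg, abs_of_nonneg (by linarith)]; linarith
        have hmem2 : Λ + δ ∈ S := by
          refine ⟨Set.mem_Ici.mpr (by linarith), hball ?_⟩
          rw [Metric.mem_ball, Real.dist_eq]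
          have he : Λ + δ - Λ = δ := by ring
          rw [he, abs_of_nonneg (by linarith)]; linarith
        exact ⟨lt_of_le_of_lt (csInf_le hbddB hmem1) (by linarith),
          lt_of_lt_of_le (by linarith) (le_csSup hbddA hmem2)⟩
      · rintro ⟨hlt1, hlt2⟩
        obtain ⟨x, hxS, hxΛ⟩ := exists_lt_of_csInf_lt hne hlt1
        obtain ⟨y, hyS, hΛy⟩ := exists_lt_of_lt_csSup hne hlt2
        exact (hSord.out hxS hyS ⟨le_of_lt hxΛ, le_of_lt hΛy⟩).2
  · refine ⟨0, 0, le_refl 0, fun Λ hΛ => ?_⟩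
    rw [hFeq]
    constructor
    · intro hFΛ
      exact absurd ⟨Set.mem_Ici.mpr hΛ, hFΛ⟩ (fun h => hne ⟨Λ, h⟩)
    · rintro ⟨h1, h2⟩; linarith
end

section
/- If Λ ≥ 0, m > 0 and the discriminant condition holds, then 8·(1 − Λa²/3)·a² < 9·m², i.e. a²/m² < (9/8)·1/(1 − Λa²/3). -/
/-- If `Λ ≥ 0`, `m > 0` and the discriminant condition holds, then
`8(1 − Λa²/3)a² < 9m²`, i.e. `a²/m² < (9/8)/(1 − Λa²/3)`. -/
theorem stmt_5 (Λ m a : ℝ) (hΛ : 0 ≤ Λ) (hm : 0 < m)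
    (hdisc : - (1 + Λ * a ^ 2 / 3) ^ 4 * (a / m) ^ 2 + 12 * (1 - Λ * a ^ 2 / 3) * Λ * a ^ 2
      + (1 - Λ * a ^ 2 / 3) ^ 3 - 9 * Λ * m ^ 2 > 0) :
    8 * (1 - Λ * a ^ 2 / 3) * a ^ 2 < 9 * m ^ 2 ∧
      a ^ 2 / m ^ 2 < (9 / 8) * (1 / (1 - Λ * a ^ 2 / 3)) := by
  set u : ℝ := Λ * a ^ 2 / 3 with hu
  have hu0 : 0 ≤ u := by
    have := mul_nonneg hΛ (sq_nonneg a); rw [hu]; linarith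
  have hm0 : m ≠ 0 := ne_of_gt hm
  have hm2 : (0:ℝ) < m ^ 2 := by positivity
  -- Step 1 : 1 - u > 0
  have h1 : 0 < 1 - u := by
    by_contra h
    push_neg at h
    have h' : 0 ≤ u - 1 := by linarith
    have hΛpos : 0 < Λ := by
      rcases hΛ.lt_or_eq with h2 | h2
      · exact h2
      · exfalso; rw [← h2] at hu; simp at hu; rw [hu] at h'; norm_num at h'
    nlinarith [mul_nonneg (sq_nonneg ((1+u)^2)) (sq_nonneg (a/m)),
      mul_nonneg (mul_nonneg h' hΛ) (sq_nonneg a),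
      mul_nonneg (mul_nonneg h' h') h',
      mul_pos hΛpos (mul_pos hm hm)]
  -- Step 2 : main inequality
  have main : 8 * (1 - u) * a ^ 2 < 9 * m ^ 2 := by
    by_contra h
    push_neg at h
    have hx : 0 < a ^ 2 := by nlinarith
    have ha0 : a ≠ 0 := by
      intro h'; rw [h'] at hx; simp at hx
    have hΛeq : Λ = 3 * u / a ^ 2 := by
      rw [hu]; field_simp
    rw [hΛeq] at hdisc
    -- polynomial form of the discriminant condition
    have key : (1+u)^4 * (a^2 * a^2) - (36*u*(1-u) + (1-u)^3) * (a^2 * m^2)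
        + 27 * u * (m^2 * m^2) < 0 := by
      have hp := mul_pos hdisc (mul_pos hx hm2)
      have hE : (-(1 + u) ^ 4 * (a / m) ^ 2 + 12 * (1 - u) * (3 * u / a ^ 2) * a ^ 2
          + (1 - u) ^ 3 - 9 * (3 * u / a ^ 2) * m ^ 2) * (a ^ 2 * m ^ 2)
          = -((1+u)^4 * (a^2 * a^2) - (36*u*(1-u) + (1-u)^3) * (a^2 * m^2)
            + 27 * u * (m^2 * m^2)) := by
        field_simp
        ring
      rw [hE] at hp
      linarith
    -- case split on k = u^2 - 14u + 1
    rcases le_or_gt (u^2 - 14*u + 1) 0 with hk | hk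
    · -- k ≤ 0 : 4A·Q = (2Ax - By)² - k³ y² ≥ 0, contradiction
      have hk3 : (u^2 - 14*u + 1)^3 ≤ 0 := Odd.pow_nonpos ⟨1, by norm_num⟩ hk
      have hA4 : (0:ℝ) < 4 * (1+u)^4 := by positivity
      have hid : 4 * (1+u)^4 * ((1+u)^4 * (a^2 * a^2) - (36*u*(1-u) + (1-u)^3) * (a^2 * m^2)
          + 27 * u * (m^2 * m^2))
          = (2*(1+u)^4 * a^2 - (36*u*(1-u) + (1-u)^3) * m^2)^2
            - (u^2 - 14*u + 1)^3 * (m^2 * m^2) := by ring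
      have hneg := mul_neg_of_pos_of_neg hA4 key
      rw [hid] at hneg
      have t1 := sq_nonneg (2*(1+u)^4 * a^2 - (36*u*(1-u) + (1-u)^3) * m^2)
      have t2 : (u^2 - 14*u + 1)^3 * (m^2 * m^2) ≤ 0 :=
        mul_nonpos_of_nonpos_of_nonneg hk3 (by positivity)
      linarith
    · -- k > 0 : 64(1-u)²·Q = A s² + (10k²+96ku) s y + 9k² y² ≥ 0 with s = 8(1-u)x - 9y ≥ 0
      have hs : 0 ≤ 8*(1-u)*a^2 - 9*m^2 := by linarith
      have h64 : (0:ℝ) < 64 * (1-u)^2 := by positivity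
      have hid : 64 * (1-u)^2 * ((1+u)^4 * (a^2 * a^2) - (36*u*(1-u) + (1-u)^3) * (a^2 * m^2)
          + 27 * u * (m^2 * m^2))
          = (1+u)^4 * (8*(1-u)*a^2 - 9*m^2)^2
            + (10*(u^2-14*u+1)^2 + 96*(u^2-14*u+1)*u) * ((8*(1-u)*a^2 - 9*m^2) * m^2)
            + 9*(u^2-14*u+1)^2 * (m^2 * m^2) := by ring
      have hneg := mul_neg_of_pos_of_neg h64 key
      rw [hid] at hneg
      have t1 : 0 ≤ (1+u)^4 * (8*(1-u)*a^2 - 9*m^2)^2 := by positivity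
      have t2 : 0 ≤ (10*(u^2-14*u+1)^2 + 96*(u^2-14*u+1)*u) * ((8*(1-u)*a^2 - 9*m^2) * m^2) := by
        apply mul_nonneg
        · nlinarith [sq_nonneg (u^2-14*u+1), mul_nonneg hk.le hu0]
        · exact mul_nonneg hs hm2.le
      have t3 : 0 ≤ 9*(u^2-14*u+1)^2 * (m^2 * m^2) := by positivity
      linarith
  refine ⟨main, ?_⟩
  have h2 : a ^ 2 / m ^ 2 < 9 / (8 * (1 - u)) := by
    rw [div_lt_div_iff₀ hm2 (by positivity)]
    nlinarith [main]
  calc a ^ 2 / m ^ 2 < 9 / (8 * (1 - u)) := h2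
    _ = (9/8) * (1/(1-u)) := by
      rw [one_div, eq_comm, mul_inv_eq_iff_eq_mul₀ h1.ne']
      field_simp
end

section
/- If Λ ≥ 0, m > 0 and the discriminant condition holds, then 1 − Λa²/3 > 0. -/
/-- If `Λ ≥ 0`, `m > 0` and the discriminant condition holds, then `1 − Λa²/3 > 0`. -/
theorem stmt_7 (Λ m a : ℝ) (hΛ : 0 ≤ Λ) (hm : 0 < m)
    (hdisc : - (1 + Λ * a ^ 2 / 3) ^ 4 * (a / m) ^ 2 + 12 * (1 - Λ * a ^ 2 / 3) * Λ * a ^ 2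
      + (1 - Λ * a ^ 2 / 3) ^ 3 - 9 * Λ * m ^ 2 > 0) :
    0 < 1 - Λ * a ^ 2 / 3 := by
  by_contra h
  push_neg at h
  have h1 : 0 ≤ Λ * a ^ 2 := by positivity
  have h2 : 0 ≤ (1 + Λ * a ^ 2 / 3) ^ 4 * (a / m) ^ 2 := by positivity
  have h3 : 0 ≤ 9 * Λ * m ^ 2 := by positivity
  nlinarith [sq_nonneg (1 - Λ * a ^ 2 / 3), mul_nonneg h1 (sq_nonneg (1 - Λ * a ^ 2 / 3))]
end

section
/- If Λ > 0, m > 0 and 1 − Λa²/3 > 0, then μ'(r) < 0 for all r ∈ [0, m/(1 − Λa²/3)]. -/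
/-- If `Λ > 0`, `m > 0` and `1 − Λa²/3 > 0`, then `μ'(r) < 0` for all
`r ∈ [0, m/(1 − Λa²/3)]`. -/
theorem stmt_10 (Λ m a : ℝ) (hΛ : 0 < Λ) (hm : 0 < m) (hb : 0 < 1 - Λ * a ^ 2 / 3)
    (μ : ℝ → ℝ) (hμ : ∀ r, μ r = (r ^ 2 + a ^ 2) * (1 - Λ * r ^ 2 / 3) - 2 * m * r) :
    ∀ r ∈ Set.Icc (0 : ℝ) (m / (1 - Λ * a ^ 2 / 3)), deriv μ r < 0 := by
  have hfun : μ = fun r => (r ^ 2 + a ^ 2) * (1 - Λ * r ^ 2 / 3) - 2 * m * r := funext hμ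
  subst hfun
  rintro r ⟨hr0, hr1⟩
  have hkey : r * (1 - Λ * a ^ 2 / 3) ≤ m := (le_div_iff₀ hb).mp hr1
  have h1 : HasDerivAt (fun r : ℝ => r ^ 2 + a ^ 2) (2 * r) r := by
    simpa using (hasDerivAt_pow 2 r).add_const (a ^ 2)
  have h2 : HasDerivAt (fun r : ℝ => 1 - Λ * r ^ 2 / 3) (-(Λ * (2 * r) / 3)) r := by
    simpa using (((hasDerivAt_pow 2 r).const_mul Λ).div_const 3).const_sub 1
  have h3 : HasDerivAt (fun r : ℝ => 2 * m * r) (2 * m) r := by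
    simpa using (hasDerivAt_id r).const_mul (2 * m)
  have hd : deriv (fun r => (r ^ 2 + a ^ 2) * (1 - Λ * r ^ 2 / 3) - 2 * m * r) r = _ :=
    ((h1.mul h2).sub h3).deriv
  rw [hd]
  rcases hr0.eq_or_lt with h | h
  · subst h
    nlinarith [sq_nonneg a]
  · nlinarith [mul_pos hΛ (pow_pos h 3), mul_nonneg hΛ.le (sq_nonneg a)]
end

section
/- Under subextremality one has r_e > m/(1 − Λa²/3). -/
set_option maxHeartbeats 1000000 in
/-- Under subextremality one has `r_e > m/(1 − Λa²/3)`. -/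
theorem stmt_11 (Λ m a : ℝ) (hΛ : 0 < Λ) (hm : 0 < m)
    (μ : ℝ → ℝ) (hμ : ∀ r, μ r = (r ^ 2 + a ^ 2) * (1 - Λ * r ^ 2 / 3) - 2 * m * r)
    (rneg rC re rc : ℝ) (h1 : rneg < rC) (h2 : rC < re) (h3 : re < rc)
    (hr1 : μ rneg = 0) (hr2 : μ rC = 0) (hr3 : μ re = 0) (hr4 : μ rc = 0) :
    re > m / (1 - Λ * a ^ 2 / 3) := by
  have E1 : (rneg ^ 2 + a ^ 2) * (1 - Λ * rneg ^ 2 / 3) - 2 * m * rneg = 0 := by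
    rw [← hμ]; exact hr1
  have E2 : (rC ^ 2 + a ^ 2) * (1 - Λ * rC ^ 2 / 3) - 2 * m * rC = 0 := by
    rw [← hμ]; exact hr2
  have E3 : (re ^ 2 + a ^ 2) * (1 - Λ * re ^ 2 / 3) - 2 * m * re = 0 := by
    rw [← hμ]; exact hr3
  have E4 : (rc ^ 2 + a ^ 2) * (1 - Λ * rc ^ 2 / 3) - 2 * m * rc = 0 := by
    rw [← hμ]; exact hr4
  have hd1 : rc - re ≠ 0 := sub_ne_zero.mpr h3.ne'
  have hd2 : re - rC ≠ 0 := sub_ne_zero.mpr h2.ne'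
  have hd3 : rC - rneg ≠ 0 := sub_ne_zero.mpr h1.ne'
  -- pair relations
  have P1 : (1 - Λ * a ^ 2 / 3) * (rc + re)
      - Λ / 3 * (rc ^ 3 + rc ^ 2 * re + rc * re ^ 2 + re ^ 3) = 2 * m := by
    have h0 : (rc - re) * ((1 - Λ * a ^ 2 / 3) * (rc + re)
        - Λ / 3 * (rc ^ 3 + rc ^ 2 * re + rc * re ^ 2 + re ^ 3) - 2 * m) = 0 := by
      linear_combination E4 - E3
    rcases mul_eq_zero.mp h0 with h | h
    · exact absurd h hd1
    · linarith
  have P2 : (1 - Λ * a ^ 2 / 3) * (re + rC)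
      - Λ / 3 * (re ^ 3 + re ^ 2 * rC + re * rC ^ 2 + rC ^ 3) = 2 * m := by
    have h0 : (re - rC) * ((1 - Λ * a ^ 2 / 3) * (re + rC)
        - Λ / 3 * (re ^ 3 + re ^ 2 * rC + re * rC ^ 2 + rC ^ 3) - 2 * m) = 0 := by
      linear_combination E3 - E2
    rcases mul_eq_zero.mp h0 with h | h
    · exact absurd h hd2
    · linarith
  have P3 : (1 - Λ * a ^ 2 / 3) * (rC + rneg)
      - Λ / 3 * (rC ^ 3 + rC ^ 2 * rneg + rC * rneg ^ 2 + rneg ^ 3) = 2 * m := by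
    have h0 : (rC - rneg) * ((1 - Λ * a ^ 2 / 3) * (rC + rneg)
        - Λ / 3 * (rC ^ 3 + rC ^ 2 * rneg + rC * rneg ^ 2 + rneg ^ 3) - 2 * m) = 0 := by
      linear_combination E2 - E1
    rcases mul_eq_zero.mp h0 with h | h
    · exact absurd h hd3
    · linarith
  -- Q1 : L = (Λ/3) S1
  have Q1 : (1 - Λ * a ^ 2 / 3)
      = Λ / 3 * (rc ^ 2 + re ^ 2 + rC ^ 2 + rc * re + rc * rC + re * rC) := by
    have hd : rc - rC ≠ 0 := sub_ne_zero.mpr (h2.trans h3).ne'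
    have h0 : (rc - rC) * ((1 - Λ * a ^ 2 / 3)
        - Λ / 3 * (rc ^ 2 + re ^ 2 + rC ^ 2 + rc * re + rc * rC + re * rC)) = 0 := by
      linear_combination P1 - P2
    rcases mul_eq_zero.mp h0 with h | h
    · exact absurd h hd
    · linarith
  have Q2 : (1 - Λ * a ^ 2 / 3)
      = Λ / 3 * (re ^ 2 + rC ^ 2 + rneg ^ 2 + re * rC + re * rneg + rC * rneg) := by
    have hd : re - rneg ≠ 0 := sub_ne_zero.mpr (h1.trans h2).ne'
    have h0 : (re - rneg) * ((1 - Λ * a ^ 2 / 3)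
        - Λ / 3 * (re ^ 2 + rC ^ 2 + rneg ^ 2 + re * rC + re * rneg + rC * rneg)) = 0 := by
      linear_combination P2 - P3
    rcases mul_eq_zero.mp h0 with h | h
    · exact absurd h hd
    · linarith
  -- sum of roots is zero
  have hs : rneg + rC + re + rc = 0 := by
    have hd : rc - rneg ≠ 0 := sub_ne_zero.mpr ((h1.trans h2).trans h3).ne'
    have hΛ' : Λ / 3 ≠ 0 := by positivity
    have h0 : Λ / 3 * ((rc - rneg) * (rneg + rC + re + rc)) = 0 := by
      linear_combination Q2 - Q1
    rcases mul_eq_zero.mp h0 with h | h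
    · exact absurd h hΛ'
    rcases mul_eq_zero.mp h with h | h
    · exact absurd h hd
    · exact h
  clear E1 E2 E3 E4 hr1 hr2 hr3 hr4 hμ P1 P3 Q2
  -- positivity of L
  have hre2 : 0 < (re - rC) * (re - rC) := mul_pos (sub_pos.mpr h2) (sub_pos.mpr h2)
  have key : 12 * (1 - Λ * a ^ 2 / 3)
      = Λ * (2 * (re + rC) ^ 2 + (re + rC + 2 * rc) ^ 2 + (re - rC) ^ 2) := by
    linear_combination 12 * Q1
  have hL : 0 < 1 - Λ * a ^ 2 / 3 := by
    linarith [key, mul_pos hΛ hre2, mul_nonneg hΛ.le (sq_nonneg (re + rC)),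
      mul_nonneg hΛ.le (sq_nonneg (re + rC + 2 * rc))]
  have hS1 : 0 < rc ^ 2 + re ^ 2 + rC ^ 2 + rc * re + rc * rC + re * rC := by
    nlinarith [hre2, sq_nonneg (re + rC), sq_nonneg (re + rC + 2 * rc)]
  -- 2m = (Λ/3) (e+c)(C+e)(C+c)
  have h3m : 2 * m = Λ / 3 * ((re + rc) * (rC + re) * (rC + rc)) := by
    linear_combination (re + rC) * Q1 - P2
  have hsign : 0 < (re + rc) * ((rC + re) * (rC + rc)) := by
    by_contra hq
    push_neg at hq
    have h9 : 0 ≤ Λ / 3 := by positivity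
    have := mul_nonpos_of_nonneg_of_nonpos h9 hq
    rw [mul_assoc] at h3m
    linarith
  -- re + rC > 0
  have heC : 0 < re + rC := by
    rcases le_or_gt 0 rC with h | h
    · linarith
    · have hsum : 0 < 2 * rC + re + rc := by linarith
      have hec : 0 ≤ re + rc := by linarith
      have hP : 0 < (rC + re) * (rC + rc) := by
        by_contra hq
        push_neg at hq
        have := mul_nonpos_of_nonneg_of_nonpos hec hq
        linarith
      by_contra h'
      push_neg at h'
      have hCc : 0 ≤ rC + rc := by linarith
      have h'' : rC + re ≤ 0 := by linarith
      have := mul_nonpos_of_nonpos_of_nonneg h'' hCc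
      linarith
  -- key identity : 2 re L - 2 m = (Λ/3) [ (e-C) S1 + (e+C)(e²+C²) ]
  have heL : 2 * re * (1 - Λ * a ^ 2 / 3) - 2 * m
      = Λ / 3 * ((re - rC) * (rc ^ 2 + re ^ 2 + rC ^ 2 + rc * re + rc * rC + re * rC)
        + (re + rC) * (re ^ 2 + rC ^ 2)) := by
    linear_combination (re - rC) * Q1 + P2
  have hT1 : 0 < (re - rC) * (rc ^ 2 + re ^ 2 + rC ^ 2 + rc * re + rc * rC + re * rC) :=
    mul_pos (sub_pos.mpr h2) hS1
  have hT2 : 0 ≤ (re + rC) * (re ^ 2 + rC ^ 2) :=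
    mul_nonneg heC.le (by positivity)
  have hsum : 0 < (re - rC) * (rc ^ 2 + re ^ 2 + rC ^ 2 + rc * re + rc * rC + re * rC)
      + (re + rC) * (re ^ 2 + rC ^ 2) := by linarith
  have hRHS : 0 < Λ / 3 * ((re - rC) * (rc ^ 2 + re ^ 2 + rC ^ 2 + rc * re + rc * rC + re * rC)
      + (re + rC) * (re ^ 2 + rC ^ 2)) := mul_pos (by positivity) hsum
  rw [gt_iff_lt, div_lt_iff₀ hL]
  linarith [heL, hRHS]
end

section
/- The function G(r) := (r₀² − r²)²/μ(r) on (r_e, r_c) satisfies G'(r) < 0 for all r ∈ (r_e, r₀) and G'(r) > 0 for all r ∈ (r₀, r_c); in particular G has a strict global minimum at r₀. -/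
set_option maxHeartbeats 4000000


/-- The function `G(r) = (r₀² − r²)²/μ(r)` satisfies `G' < 0` on `(r_e, r₀)`
and `G' > 0` on `(r₀, r_c)`; in particular `G` has a strict global minimum at `r₀`. -/
theorem stmt_12 (Λ m a : ℝ) (hΛ : 0 < Λ) (hm : 0 < m)
    (μ : ℝ → ℝ) (hμ : ∀ r, μ r = (r ^ 2 + a ^ 2) * (1 - Λ * r ^ 2 / 3) - 2 * m * r)
    (rneg rC re rc : ℝ) (h1 : rneg < rC) (h2 : rC < re) (h3 : re < rc)
    (hr1 : μ rneg = 0) (hr2 : μ rC = 0) (hr3 : μ re = 0) (hr4 : μ rc = 0)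
    (r₀ : ℝ) (hr₀ : r₀ ∈ Set.Ioo re rc) (hcrit : deriv μ r₀ = 0)
    (G : ℝ → ℝ) (hG : ∀ r, G r = (r₀ ^ 2 - r ^ 2) ^ 2 / μ r) :
    (∀ r ∈ Set.Ioo re r₀, deriv G r < 0) ∧
    (∀ r ∈ Set.Ioo r₀ rc, 0 < deriv G r) ∧
    (∀ r ∈ Set.Ioo re rc, r ≠ r₀ → G r₀ < G r) := by
  obtain ⟨h03, h04⟩ := hr₀
  have hΛ3 : (0:ℝ) < Λ/3 := by linarith
  have hcne : -(Λ/3) ≠ 0 := ne_of_lt (by linarith)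
  set c3 := -(Λ/3)*(rneg+rC+re+rc) with hc3def
  set d2 := (1 - Λ*a^2/3) + (Λ/3)*(rneg*rC + rneg*re + rneg*rc + rC*re + rC*rc + re*rc) with hd2def
  set d1 := -(2*m) - (Λ/3)*(rneg*rC*re + rneg*rC*rc + rneg*re*rc + rC*re*rc) with hd1def
  set d0 := a^2 + (Λ/3)*(rneg*rC*re*rc) with hd0def
  have key : ∀ r, μ r = -(Λ/3)*((r-rneg)*(r-rC)*(r-re)*(r-rc))
      + (c3*r^3 + d2*r^2 + d1*r + d0) := by
    intro r; rw [hμ r, hc3def, hd2def, hd1def, hd0def]; ring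
  have e1 : c3*rneg^3 + d2*rneg^2 + d1*rneg + d0 = 0 := by
    have h := key rneg; rw [hr1] at h; linear_combination -h
  have e2 : c3*rC^3 + d2*rC^2 + d1*rC + d0 = 0 := by
    have h := key rC; rw [hr2] at h; linear_combination -h
  have e3 : c3*re^3 + d2*re^2 + d1*re + d0 = 0 := by
    have h := key re; rw [hr3] at h; linear_combination -h
  have e4 : c3*rc^3 + d2*rc^2 + d1*rc + d0 = 0 := by
    have h := key rc; rw [hr4] at h; linear_combination -h
  have n12 : rneg - rC ≠ 0 := sub_ne_zero.mpr (ne_of_lt h1)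
  have n23 : rC - re ≠ 0 := sub_ne_zero.mpr (ne_of_lt h2)
  have n34 : re - rc ≠ 0 := sub_ne_zero.mpr (ne_of_lt h3)
  have n13 : rneg - re ≠ 0 := sub_ne_zero.mpr (ne_of_lt (h1.trans h2))
  have n24 : rC - rc ≠ 0 := sub_ne_zero.mpr (ne_of_lt (h2.trans h3))
  have n14 : rneg - rc ≠ 0 := sub_ne_zero.mpr (ne_of_lt ((h1.trans h2).trans h3))
  have h12 : c3*(rneg^2+rneg*rC+rC^2) + d2*(rneg+rC) + d1 = 0 := by
    have h : (rneg-rC)*(c3*(rneg^2+rneg*rC+rC^2) + d2*(rneg+rC) + d1) = 0 := by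
      linear_combination e1 - e2
    exact (mul_eq_zero.mp h).resolve_left n12
  have h23 : c3*(rC^2+rC*re+re^2) + d2*(rC+re) + d1 = 0 := by
    have h : (rC-re)*(c3*(rC^2+rC*re+re^2) + d2*(rC+re) + d1) = 0 := by
      linear_combination e2 - e3
    exact (mul_eq_zero.mp h).resolve_left n23
  have h34 : c3*(re^2+re*rc+rc^2) + d2*(re+rc) + d1 = 0 := by
    have h : (re-rc)*(c3*(re^2+re*rc+rc^2) + d2*(re+rc) + d1) = 0 := by
      linear_combination e3 - e4
    exact (mul_eq_zero.mp h).resolve_left n34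
  have h123 : c3*(rneg+rC+re) + d2 = 0 := by
    have h : (rneg-re)*(c3*(rneg+rC+re) + d2) = 0 := by linear_combination h12 - h23
    exact (mul_eq_zero.mp h).resolve_left n13
  have h234 : c3*(rC+re+rc) + d2 = 0 := by
    have h : (rC-rc)*(c3*(rC+re+rc) + d2) = 0 := by linear_combination h23 - h34
    exact (mul_eq_zero.mp h).resolve_left n24
  have hc3 : c3 = 0 := by
    have h : (rneg - rc)*c3 = 0 := by linear_combination h123 - h234
    exact (mul_eq_zero.mp h).resolve_left n14
  have hd2 : d2 = 0 := by linear_combination h123 - (rneg+rC+re)*hc3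
  have hd1 : d1 = 0 := by
    linear_combination h12 - (rneg^2+rneg*rC+rC^2)*hc3 - (rneg+rC)*hd2
  have hd0 : d0 = 0 := by
    linear_combination e1 - rneg^3*hc3 - rneg^2*hd2 - rneg*hd1
  have hfac : ∀ r, μ r = -(Λ/3)*((r-rneg)*(r-rC)*(r-re)*(r-rc)) := by
    intro r; rw [key r, hc3, hd2, hd1, hd0]; ring
  -- Vieta consequences
  have hs1 : rneg + rC + re + rc = 0 := by
    have h0 : -(Λ/3)*(rneg+rC+re+rc) = 0 := by rw [← hc3def]; exact hc3
    exact (mul_eq_zero.mp h0).resolve_left hcne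
  have hs3 : rneg*rC*re + rneg*rC*rc + rneg*re*rc + rC*re*rc < 0 := by
    have h0 : -(2*m) - (Λ/3)*(rneg*rC*re + rneg*rC*rc + rneg*re*rc + rC*re*rc) = 0 := by
      rw [← hd1def]; exact hd1
    by_contra hh
    push_neg at hh
    nlinarith [mul_nonneg hΛ3.le hh]
  have hre : 0 < re := by
    by_contra hh
    push_neg at hh
    have hC' : rC < 0 := lt_of_lt_of_le h2 hh
    have hn' : rneg < 0 := h1.trans hC'
    have hc' : 0 < rc := by linarith
    have hq : 0 < rneg*rC - re*rc := by
      nlinarith [mul_pos (neg_pos.mpr hn') (neg_pos.mpr hC'),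
        mul_nonneg (neg_nonneg.mpr hh) hc'.le]
    have hs3e : rneg*rC*re + rneg*rC*rc + rneg*re*rc + rC*re*rc
        = (re+rc)*(rneg*rC - re*rc) := by linear_combination (re*rc)*hs1
    have hsum : re + rc < 0 := by
      by_contra h4
      push_neg at h4
      nlinarith [mul_nonneg h4 hq.le]
    linarith
  have hr0pos : 0 < r₀ := hre.trans h03
  -- μ positive on the interval
  have hμpos : ∀ r, re < r → r < rc → 0 < μ r := by
    intro r ha hb
    rw [hfac r]
    have f1 : 0 < r - rneg := by linarith
    have f2 : 0 < r - rC := by linarith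
    have f3 : 0 < r - re := by linarith
    have f4 : r - rc < 0 := by linarith
    have hP : (r-rneg)*(r-rC)*(r-re)*(r-rc) < 0 :=
      mul_neg_of_pos_of_neg (mul_pos (mul_pos f1 f2) f3) f4
    exact mul_pos_of_neg_of_neg (by linarith) hP
  -- derivative of μ
  have hμfun : μ = fun r => -(Λ/3)*((r-rneg)*(r-rC)*(r-re)*(r-rc)) := funext hfac
  have hμd : ∀ x:ℝ, HasDerivAt μ
      (-(Λ/3)*((x-rC)*(x-re)*(x-rc) + (x-rneg)*(x-re)*(x-rc)
        + (x-rneg)*(x-rC)*(x-rc) + (x-rneg)*(x-rC)*(x-re))) x := by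
    intro x
    have h := (((((hasDerivAt_id x).sub_const rneg).mul
        ((hasDerivAt_id x).sub_const rC)).mul
        ((hasDerivAt_id x).sub_const re)).mul
        ((hasDerivAt_id x).sub_const rc)).const_mul (-(Λ/3))
    simp only [id_eq, Pi.mul_apply] at h
    rw [hμfun]
    refine h.congr_deriv ?_
    ring
  have hC0 : (r₀-rC)*(r₀-re)*(r₀-rc) + (r₀-rneg)*(r₀-re)*(r₀-rc)
      + (r₀-rneg)*(r₀-rC)*(r₀-rc) + (r₀-rneg)*(r₀-rC)*(r₀-re) = 0 := by
    have h := (hμd r₀).deriv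
    rw [hcrit] at h
    exact (mul_eq_zero.mp h.symm).resolve_left hcne
  -- derivative of G
  have hGfun : G = fun r => (r₀^2 - r^2)^2 / μ r := funext hG
  have hGd : ∀ x, re < x → x < rc → deriv G x =
      (2*(r₀^2 - x^2)*(-(2*x)) * μ x - (r₀^2 - x^2)^2 *
        (-(Λ/3)*((x-rC)*(x-re)*(x-rc) + (x-rneg)*(x-re)*(x-rc)
          + (x-rneg)*(x-rC)*(x-rc) + (x-rneg)*(x-rC)*(x-re)))) / μ x ^ 2 := by
    intro x ha hb
    have hb' : HasDerivAt (fun y:ℝ => r₀^2 - y^2) (-(2*x)) x := by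
      have h := (hasDerivAt_pow 2 x).const_sub (r₀^2)
      refine h.congr_deriv ?_
      push_cast
      ring
    have hnum : HasDerivAt (fun y:ℝ => (r₀^2 - y^2)^2) (2*(r₀^2 - x^2)*(-(2*x))) x := by
      have h := hb'.pow 2
      refine h.congr_deriv ?_
      push_cast
      ring
    have hdiv := hnum.div (hμd x) (ne_of_gt (hμpos x ha hb))
    rw [hGfun]
    exact hdiv.deriv
  -- main sign lemma
  have main : ∀ r, re < r → r < rc →
      (r < r₀ → deriv G r < 0) ∧ (r₀ < r → 0 < deriv G r) := by
    intro r ha hb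
    have hμr := hμpos r ha hb
    have f1 : 0 < r - rneg := by linarith
    have f2 : 0 < r - rC := by linarith
    have f3 : 0 < r - re := by linarith
    have f4 : r - rc < 0 := by linarith
    have g1 : 0 < r₀ - rneg := by linarith
    have g2 : 0 < r₀ - rC := by linarith
    have g3 : 0 < r₀ - re := by linarith
    have g4 : r₀ - rc < 0 := by linarith
    have hrpos : 0 < r := hre.trans ha
    have hrpq : 0 < r + r₀ := by linarith
    have hDq : (r₀-rneg)*(r₀-rC)*(r₀-re)*(r₀-rc) < 0 :=
      mul_neg_of_pos_of_neg (mul_pos (mul_pos g1 g2) g3) g4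
    have hPneg : (r-rneg)*(r-rC)*(r-re)*(r-rc) < 0 :=
      mul_neg_of_pos_of_neg (mul_pos (mul_pos f1 f2) f3) f4
    have t1 : 0 < ((r-rC)*(r-re)*(r-rc))*((r₀-rC)*(r₀-re)*(r₀-rc)) :=
      mul_pos_of_neg_of_neg (mul_neg_of_pos_of_neg (mul_pos f2 f3) f4)
        (mul_neg_of_pos_of_neg (mul_pos g2 g3) g4)
    have t2 : 0 < ((r-rneg)*(r-re)*(r-rc))*((r₀-rneg)*(r₀-re)*(r₀-rc)) :=
      mul_pos_of_neg_of_neg (mul_neg_of_pos_of_neg (mul_pos f1 f3) f4)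
        (mul_neg_of_pos_of_neg (mul_pos g1 g3) g4)
    have t3 : 0 < ((r-rneg)*(r-rC)*(r-rc))*((r₀-rneg)*(r₀-rC)*(r₀-rc)) :=
      mul_pos_of_neg_of_neg (mul_neg_of_pos_of_neg (mul_pos f1 f2) f4)
        (mul_neg_of_pos_of_neg (mul_pos g1 g2) g4)
    have t4 : 0 < ((r-rneg)*(r-rC)*(r-re))*((r₀-rneg)*(r₀-rC)*(r₀-re)) :=
      mul_pos (mul_pos (mul_pos f1 f2) f3) (mul_pos (mul_pos g1 g2) g3)
    have hSig : 0 < ((r-rC)*(r-re)*(r-rc))*((r₀-rC)*(r₀-re)*(r₀-rc))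
        + ((r-rneg)*(r-re)*(r-rc))*((r₀-rneg)*(r₀-re)*(r₀-rc))
        + ((r-rneg)*(r-rC)*(r-rc))*((r₀-rneg)*(r₀-rC)*(r₀-rc))
        + ((r-rneg)*(r-rC)*(r-re))*((r₀-rneg)*(r₀-rC)*(r₀-re)) :=
      add_pos (add_pos (add_pos t1 t2) t3) t4
    have hder := hGd r ha hb
    have hid : (2*(r₀^2 - r^2)*(-(2*r)) * μ r - (r₀^2 - r^2)^2 *
          (-(Λ/3)*((r-rC)*(r-re)*(r-rc) + (r-rneg)*(r-re)*(r-rc)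
            + (r-rneg)*(r-rC)*(r-rc) + (r-rneg)*(r-rC)*(r-re))))
          * ((r₀-rneg)*(r₀-rC)*(r₀-re)*(r₀-rc))
        + 4*r*(r-r₀)*(r+r₀)*(Λ/3)*(-((r-rneg)*(r-rC)*(r-re)*(r-rc)))
          *(-((r₀-rneg)*(r₀-rC)*(r₀-re)*(r₀-rc)))
        + (Λ/3)*(r₀^2-r^2)^2*(r-r₀)*(((r-rC)*(r-re)*(r-rc))*((r₀-rC)*(r₀-re)*(r₀-rc))
            + ((r-rneg)*(r-re)*(r-rc))*((r₀-rneg)*(r₀-re)*(r₀-rc))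
            + ((r-rneg)*(r-rC)*(r-rc))*((r₀-rneg)*(r₀-rC)*(r₀-rc))
            + ((r-rneg)*(r-rC)*(r-re))*((r₀-rneg)*(r₀-rC)*(r₀-re))) = 0 := by
      linear_combination
        (Λ/3)*(r₀^2-r^2)^2*((r-rneg)*(r-rC)*(r-re)*(r-rc)) * hC0
        + (2*(r₀^2-r^2)*(-(2*r))*((r₀-rneg)*(r₀-rC)*(r₀-re)*(r₀-rc))) * hfac r
    have hDqne : ((r₀-rneg)*(r₀-rC)*(r₀-re)*(r₀-rc)) ≠ 0 := ne_of_lt hDq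
    constructor
    · intro hlt
      have hrneg : r - r₀ < 0 := by linarith
      have hsq : 0 < r₀^2 - r^2 := by
        have hx : 0 < (r₀ - r) * (r₀ + r) := mul_pos (by linarith : (0:ℝ) < r₀ - r) (by linarith : (0:ℝ) < r₀ + r)
        linarith [hx, (show (r₀ - r) * (r₀ + r) = r₀^2 - r^2 by ring)]
      have hQ2 : 4*r*(r-r₀)*(r+r₀)*(Λ/3)*(-((r-rneg)*(r-rC)*(r-re)*(r-rc)))
          *(-((r₀-rneg)*(r₀-rC)*(r₀-re)*(r₀-rc))) < 0 :=
        mul_neg_of_neg_of_pos (mul_neg_of_neg_of_pos (mul_neg_of_neg_of_pos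
          (mul_neg_of_neg_of_pos (mul_neg_of_pos_of_neg (by linarith : (0:ℝ) < 4*r) hrneg)
            hrpq) hΛ3) (neg_pos.mpr hPneg)) (neg_pos.mpr hDq)
      have hQ3 : (Λ/3)*(r₀^2-r^2)^2*(r-r₀)*(((r-rC)*(r-re)*(r-rc))*((r₀-rC)*(r₀-re)*(r₀-rc))
            + ((r-rneg)*(r-re)*(r-rc))*((r₀-rneg)*(r₀-re)*(r₀-rc))
            + ((r-rneg)*(r-rC)*(r-rc))*((r₀-rneg)*(r₀-rC)*(r₀-rc))
            + ((r-rneg)*(r-rC)*(r-re))*((r₀-rneg)*(r₀-rC)*(r₀-re))) < 0 :=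
        mul_neg_of_neg_of_pos (mul_neg_of_pos_of_neg (mul_pos hΛ3 (pow_pos hsq 2)) hrneg) hSig
      have hNDq : 0 < (2*(r₀^2 - r^2)*(-(2*r)) * μ r - (r₀^2 - r^2)^2 *
          (-(Λ/3)*((r-rC)*(r-re)*(r-rc) + (r-rneg)*(r-re)*(r-rc)
            + (r-rneg)*(r-rC)*(r-rc) + (r-rneg)*(r-rC)*(r-re))))
          * ((r₀-rneg)*(r₀-rC)*(r₀-re)*(r₀-rc)) := by linarith
      have hNUM : (2*(r₀^2 - r^2)*(-(2*r)) * μ r - (r₀^2 - r^2)^2 *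
          (-(Λ/3)*((r-rC)*(r-re)*(r-rc) + (r-rneg)*(r-re)*(r-rc)
            + (r-rneg)*(r-rC)*(r-rc) + (r-rneg)*(r-rC)*(r-re)))) < 0 := by
        rcases mul_pos_iff.mp hNDq with ⟨_, h⟩ | ⟨h, _⟩
        · exact absurd hDq (not_lt.mpr h.le)
        · exact h
      rw [hder]
      exact div_neg_of_neg_of_pos hNUM (pow_pos hμr 2)
    · intro hlt
      have hrneg : 0 < r - r₀ := by linarith
      have hsqne : r₀^2 - r^2 ≠ 0 := by
        have hx : 0 < (r - r₀) * (r + r₀) := mul_pos hrneg hrpq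
        have : r₀^2 - r^2 < 0 := by
          linarith [hx, (show (r - r₀) * (r + r₀) = r^2 - r₀^2 by ring)]
        exact ne_of_lt this
      have hQ2 : 0 < 4*r*(r-r₀)*(r+r₀)*(Λ/3)*(-((r-rneg)*(r-rC)*(r-re)*(r-rc)))
          *(-((r₀-rneg)*(r₀-rC)*(r₀-re)*(r₀-rc))) :=
        mul_pos (mul_pos (mul_pos (mul_pos (mul_pos (by linarith : (0:ℝ) < 4*r) hrneg)
          hrpq) hΛ3) (neg_pos.mpr hPneg)) (neg_pos.mpr hDq)
      have hQ3 : 0 < (Λ/3)*(r₀^2-r^2)^2*(r-r₀)*(((r-rC)*(r-re)*(r-rc))*((r₀-rC)*(r₀-re)*(r₀-rc))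
            + ((r-rneg)*(r-re)*(r-rc))*((r₀-rneg)*(r₀-re)*(r₀-rc))
            + ((r-rneg)*(r-rC)*(r-rc))*((r₀-rneg)*(r₀-rC)*(r₀-rc))
            + ((r-rneg)*(r-rC)*(r-re))*((r₀-rneg)*(r₀-rC)*(r₀-re))) :=
        mul_pos (mul_pos (mul_pos hΛ3 (pow_two_pos_of_ne_zero hsqne)) hrneg) hSig
      have hNDq : (2*(r₀^2 - r^2)*(-(2*r)) * μ r - (r₀^2 - r^2)^2 *
          (-(Λ/3)*((r-rC)*(r-re)*(r-rc) + (r-rneg)*(r-re)*(r-rc)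
            + (r-rneg)*(r-rC)*(r-rc) + (r-rneg)*(r-rC)*(r-re))))
          * ((r₀-rneg)*(r₀-rC)*(r₀-re)*(r₀-rc)) < 0 := by linarith
      have hNUM : 0 < (2*(r₀^2 - r^2)*(-(2*r)) * μ r - (r₀^2 - r^2)^2 *
          (-(Λ/3)*((r-rC)*(r-re)*(r-rc) + (r-rneg)*(r-re)*(r-rc)
            + (r-rneg)*(r-rC)*(r-rc) + (r-rneg)*(r-rC)*(r-re)))) := by
        rcases mul_neg_iff.mp hNDq with ⟨h, _⟩ | ⟨_, h⟩
        · exact h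
        · exact absurd hDq (not_lt.mpr h.le)
      rw [hder]
      exact div_pos hNUM (pow_pos hμr 2)
  refine ⟨?_, ?_, ?_⟩
  · intro r hr
    exact (main r hr.1 (hr.2.trans h04)).1 hr.2
  · intro r hr
    exact (main r (h03.trans hr.1) hr.2).2 hr.1
  · intro r hr hne
    obtain ⟨ha, hb⟩ := hr
    have hμr := hμpos r ha hb
    have hG0 : G r₀ = 0 := by rw [hG r₀]; simp
    have hpos : 0 < G r := by
      rw [hG r]
      apply div_pos _ hμr
      have hne2 : r₀^2 - r^2 ≠ 0 := by
        intro h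
        have h' : (r₀ - r)*(r₀ + r) = 0 := by linear_combination h
        rcases mul_eq_zero.mp h' with h'' | h''
        · exact hne (by linarith [sub_eq_zero.mp h''])
        · have : 0 < r := hre.trans ha
          linarith
      exact pow_two_pos_of_ne_zero hne2
    rw [hG0]
    exact hpos
end

section
/- Let θ ∈ (0, π) and (ξ_r, ξ_ψ, ξ_θ) ∈ ℝ³. If q_σ(r₀, θ; ξ_r, ξ_ψ, ξ_θ) = 0, then ξ_r = ξ_ψ = ξ_θ = 0; i.e. the characteristic set of the mode operator is disjoint from {r = r₀}. -/
/-- A cubic vanishing at four distinct points has all coefficients zero. -/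
lemma cubic_four_roots (B C D E x1 x2 x3 x4 : ℝ)
    (h12 : x1 ≠ x2) (h13 : x1 ≠ x3) (h14 : x1 ≠ x4)
    (h23 : x2 ≠ x3) (h24 : x2 ≠ x4) (h34 : x3 ≠ x4)
    (e1 : B * x1 ^ 3 + C * x1 ^ 2 + D * x1 + E = 0)
    (e2 : B * x2 ^ 3 + C * x2 ^ 2 + D * x2 + E = 0)
    (e3 : B * x3 ^ 3 + C * x3 ^ 2 + D * x3 + E = 0)
    (e4 : B * x4 ^ 3 + C * x4 ^ 2 + D * x4 + E = 0) :
    B = 0 ∧ C = 0 ∧ D = 0 ∧ E = 0 := by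
  have q12 : B * (x1 ^ 2 + x1 * x2 + x2 ^ 2) + C * (x1 + x2) + D = 0 := by
    have h : (x1 - x2) * (B * (x1 ^ 2 + x1 * x2 + x2 ^ 2) + C * (x1 + x2) + D) = 0 := by
      linear_combination e1 - e2
    rcases mul_eq_zero.1 h with h' | h'
    · exact absurd (sub_eq_zero.1 h') h12
    · exact h'
  have q13 : B * (x1 ^ 2 + x1 * x3 + x3 ^ 2) + C * (x1 + x3) + D = 0 := by
    have h : (x1 - x3) * (B * (x1 ^ 2 + x1 * x3 + x3 ^ 2) + C * (x1 + x3) + D) = 0 := by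
      linear_combination e1 - e3
    rcases mul_eq_zero.1 h with h' | h'
    · exact absurd (sub_eq_zero.1 h') h13
    · exact h'
  have q14 : B * (x1 ^ 2 + x1 * x4 + x4 ^ 2) + C * (x1 + x4) + D = 0 := by
    have h : (x1 - x4) * (B * (x1 ^ 2 + x1 * x4 + x4 ^ 2) + C * (x1 + x4) + D) = 0 := by
      linear_combination e1 - e4
    rcases mul_eq_zero.1 h with h' | h'
    · exact absurd (sub_eq_zero.1 h') h14
    · exact h'
  have l123 : B * (x1 + x2 + x3) + C = 0 := by
    have h : (x2 - x3) * (B * (x1 + x2 + x3) + C) = 0 := by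
      linear_combination q12 - q13
    rcases mul_eq_zero.1 h with h' | h'
    · exact absurd (sub_eq_zero.1 h') h23
    · exact h'
  have l124 : B * (x1 + x2 + x4) + C = 0 := by
    have h : (x2 - x4) * (B * (x1 + x2 + x4) + C) = 0 := by
      linear_combination q12 - q14
    rcases mul_eq_zero.1 h with h' | h'
    · exact absurd (sub_eq_zero.1 h') h24
    · exact h'
  have hB : B = 0 := by
    have h : B * (x3 - x4) = 0 := by linear_combination l123 - l124
    rcases mul_eq_zero.1 h with h' | h'
    · exact h'
    · exact absurd (sub_eq_zero.1 h') h34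
  have hC : C = 0 := by linear_combination l123 - (x1 + x2 + x3) * hB
  have hD : D = 0 := by
    linear_combination q12 - (x1 ^ 2 + x1 * x2 + x2 ^ 2) * hB - (x1 + x2) * hC
  have hE : E = 0 := by
    linear_combination e1 - x1 ^ 3 * hB - x1 ^ 2 * hC - x1 * hD
  exact ⟨hB, hC, hD, hE⟩

set_option maxHeartbeats 1600000 in
/-- The characteristic set of the mode operator `P_σ` is disjoint from
`{r = r₀}`: if `q_σ(r₀, θ; ξ_r, ξ_ψ, ξ_θ) = 0` then `ξ_r = ξ_ψ = ξ_θ = 0`. -/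
theorem stmt_16 (Λ m a : ℝ) (hΛ : 0 < Λ) (hm : 0 < m)
    (μ : ℝ → ℝ) (hμ : ∀ r, μ r = (r ^ 2 + a ^ 2) * (1 - Λ * r ^ 2 / 3) - 2 * m * r)
    (rneg rC re rc : ℝ) (h1 : rneg < rC) (h2 : rC < re) (h3 : re < rc)
    (hr1 : μ rneg = 0) (hr2 : μ rC = 0) (hr3 : μ re = 0) (hr4 : μ rc = 0)
    (r₀ : ℝ) (hr₀ : r₀ ∈ Set.Ioo re rc) (hcrit : deriv μ r₀ = 0)
    (b : ℝ) (hb : b = 1 + Λ * a ^ 2 / 3)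
    (c : ℝ → ℝ) (hc : ∀ θ, c θ = 1 + (Λ * a ^ 2 / 3) * Real.cos θ ^ 2)
    (qσ : ℝ → ℝ → ℝ → ℝ → ℝ → ℝ)
    (hqσ : ∀ r θ ξr ξψ ξθ, qσ r θ ξr ξψ ξθ =
      μ r * ξr ^ 2 + c θ * ξθ ^ 2
        + (b ^ 2 / (r₀ ^ 2 + a ^ 2) ^ 2)
          * ((r₀ ^ 2 + a ^ 2 * Real.cos θ ^ 2) ^ 2 / (c θ * Real.sin θ ^ 2)
            - a ^ 2 * (r₀ ^ 2 - r ^ 2) ^ 2 / μ r) * ξψ ^ 2) :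
    ∀ θ ∈ Set.Ioo (0 : ℝ) Real.pi, ∀ ξr ξψ ξθ : ℝ,
      qσ r₀ θ ξr ξψ ξθ = 0 → ξr = 0 ∧ ξψ = 0 ∧ ξθ = 0 := by
  -- r₀ ≠ 0 from the critical point equation
  have hμf : μ = fun r => (r ^ 2 + a ^ 2) * (1 - Λ * r ^ 2 / 3) - 2 * m * r := funext hμ
  have hp : HasDerivAt (fun r : ℝ => r ^ 2 + a ^ 2) (2 * r₀) r₀ := by
    simpa using (hasDerivAt_pow 2 r₀).add_const (a ^ 2)
  have hq : HasDerivAt (fun r : ℝ => 1 - Λ * r ^ 2 / 3) (-(Λ * (2 * r₀) / 3)) r₀ := by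
    have h := (((hasDerivAt_pow 2 r₀).const_mul Λ).div_const 3).const_sub 1
    simpa using h
  have hl : HasDerivAt (fun r : ℝ => 2 * m * r) (2 * m) r₀ := by
    simpa using (hasDerivAt_id r₀).const_mul (2 * m)
  have hd : deriv μ r₀ =
      2 * r₀ * (1 - Λ * r₀ ^ 2 / 3) + (r₀ ^ 2 + a ^ 2) * (-(Λ * (2 * r₀) / 3)) - 2 * m := by
    rw [hμf]
    exact (((hp.mul hq).sub hl)).deriv
  have hr0ne : r₀ ≠ 0 := by
    intro h
    rw [hcrit, h] at hd
    nlinarith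
  -- μ(r₀) > 0 via the factorization through the four roots
  have h12 : rneg ≠ rC := ne_of_lt h1
  have h13 : rneg ≠ re := ne_of_lt (h1.trans h2)
  have h14 : rneg ≠ rc := ne_of_lt ((h1.trans h2).trans h3)
  have h23 : rC ≠ re := ne_of_lt h2
  have h24 : rC ≠ rc := ne_of_lt (h2.trans h3)
  have h34 : re ≠ rc := ne_of_lt h3
  set e1 := rneg + rC + re + rc with he1
  set e2 := rneg * rC + rneg * re + rneg * rc + rC * re + rC * rc + re * rc with he2
  set e3 := rneg * rC * re + rneg * rC * rc + rneg * re * rc + rC * re * rc with he3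
  set e4 := rneg * rC * re * rc with he4
  obtain ⟨hB, hC, hD, hE⟩ := cubic_four_roots (-(Λ / 3) * e1) ((1 - Λ * a ^ 2 / 3) + Λ / 3 * e2)
      (-(2 * m) - Λ / 3 * e3) (a ^ 2 + Λ / 3 * e4) rneg rC re rc h12 h13 h14 h23 h24 h34
      (by rw [he1, he2, he3, he4]; have := hr1; rw [hμ] at this; linear_combination this)
      (by rw [he1, he2, he3, he4]; have := hr2; rw [hμ] at this; linear_combination this)
      (by rw [he1, he2, he3, he4]; have := hr3; rw [hμ] at this; linear_combination this)
      (by rw [he1, he2, he3, he4]; have := hr4; rw [hμ] at this; linear_combination this)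
  have hfact : μ r₀ = Λ / 3 * ((r₀ - rneg) * (r₀ - rC) * (r₀ - re) * (rc - r₀)) := by
    rw [hμ]
    rw [he1] at hB; rw [he2] at hC; rw [he3] at hD; rw [he4] at hE
    linear_combination r₀ ^ 3 * hB + r₀ ^ 2 * hC + r₀ * hD + hE
  obtain ⟨hre, hrc⟩ := hr₀
  have hμpos : 0 < μ r₀ := by
    rw [hfact]
    have p1 : 0 < r₀ - rneg := by linarith
    have p2 : 0 < r₀ - rC := by linarith
    have p3 : 0 < r₀ - re := by linarith
    have p4 : 0 < rc - r₀ := by linarith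
    positivity
  intro θ hθ ξr ξψ ξθ hq0
  obtain ⟨hθ0, hθπ⟩ := hθ
  have hsin : 0 < Real.sin θ := Real.sin_pos_of_pos_of_lt_pi hθ0 hθπ
  have hsq0 : 0 < r₀ ^ 2 :=
    lt_of_le_of_ne (sq_nonneg r₀) (Ne.symm (pow_ne_zero 2 hr0ne))
  have hΛa : 0 ≤ Λ * a ^ 2 := mul_nonneg hΛ.le (sq_nonneg a)
  have hcpos : 0 < c θ := by
    rw [hc]
    nlinarith [mul_nonneg hΛa (sq_nonneg (Real.cos θ)), hΛa]
  have hnum : 0 < (r₀ ^ 2 + a ^ 2 * Real.cos θ ^ 2) := by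
    linarith [mul_nonneg (sq_nonneg a) (sq_nonneg (Real.cos θ)), hsq0]
  have hbpos : 0 < b := by rw [hb]; linarith
  have hra : 0 < r₀ ^ 2 + a ^ 2 := by linarith [sq_nonneg a, hsq0]
  have hK : 0 < (b ^ 2 / (r₀ ^ 2 + a ^ 2) ^ 2)
      * ((r₀ ^ 2 + a ^ 2 * Real.cos θ ^ 2) ^ 2 / (c θ * Real.sin θ ^ 2)
        - a ^ 2 * (r₀ ^ 2 - r₀ ^ 2) ^ 2 / μ r₀) := by
    have hz : a ^ 2 * (r₀ ^ 2 - r₀ ^ 2) ^ 2 / μ r₀ = 0 := by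
      simp
    rw [hz, sub_zero]
    have hden : 0 < c θ * Real.sin θ ^ 2 := by positivity
    positivity
  rw [hqσ] at hq0
  set K := (b ^ 2 / (r₀ ^ 2 + a ^ 2) ^ 2)
      * ((r₀ ^ 2 + a ^ 2 * Real.cos θ ^ 2) ^ 2 / (c θ * Real.sin θ ^ 2)
        - a ^ 2 * (r₀ ^ 2 - r₀ ^ 2) ^ 2 / μ r₀) with hKdef
  have t1 : 0 ≤ μ r₀ * ξr ^ 2 := mul_nonneg hμpos.le (sq_nonneg _)
  have t2 : 0 ≤ c θ * ξθ ^ 2 := mul_nonneg hcpos.le (sq_nonneg _)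
  have t3 : 0 ≤ K * ξψ ^ 2 := mul_nonneg hK.le (sq_nonneg _)
  have z1 : μ r₀ * ξr ^ 2 = 0 := by linarith
  have z2 : c θ * ξθ ^ 2 = 0 := by linarith
  have z3 : K * ξψ ^ 2 = 0 := by linarith
  refine ⟨?_, ?_, ?_⟩
  · rcases mul_eq_zero.1 z1 with h | h
    · exact absurd h hμpos.ne'
    · exact pow_eq_zero_iff (two_ne_zero) |>.1 h
  · rcases mul_eq_zero.1 z3 with h | h
    · exact absurd h hK.ne'
    · exact pow_eq_zero_iff (two_ne_zero) |>.1 h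
  · rcases mul_eq_zero.1 z2 with h | h
    · exact absurd h hcpos.ne'
    · exact pow_eq_zero_iff (two_ne_zero) |>.1 h
end

section
/- If m > 0, a ≠ 0, Λ ≥ 0, 1 − Λa²/3 > 0 and 8·(1 − Λa²/3)·a² < 9·m², then for all r with 0 < r ≤ 4a²/(3m) one has 4m·r⁴ − (8/3)·a²·(1 + Λa²/3)·r³ − 4m·a²·r² < 0. (This expression is the derivative of h(r) with respect to Λ, so h decreases with increasing Λ on this range of r.) -/
/-- If `m > 0`, `a ≠ 0`, `Λ ≥ 0`, `1 − Λa²/3 > 0` and `8(1 − Λa²/3)a² < 9m²`,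
then for all `0 < r ≤ 4a²/(3m)` one has `4m·r⁴ − (8/3)a²(1 + Λa²/3)·r³ − 4ma²·r² < 0`. -/
theorem stmt_18 (Λ m a : ℝ) (hm : 0 < m) (ha : a ≠ 0) (hΛ : 0 ≤ Λ)
    (hb : 0 < 1 - Λ * a ^ 2 / 3) (hmax : 8 * (1 - Λ * a ^ 2 / 3) * a ^ 2 < 9 * m ^ 2) :
    ∀ r : ℝ, 0 < r → r ≤ 4 * a ^ 2 / (3 * m) →
      4 * m * r ^ 4 - (8 / 3) * a ^ 2 * (1 + Λ * a ^ 2 / 3) * r ^ 3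
        - 4 * m * a ^ 2 * r ^ 2 < 0 := by
  intro r hr hrR
  have ha2 : 0 < a ^ 2 := by positivity
  set c : ℝ := Λ * a ^ 2 / 3 with hc
  have hc0 : 0 ≤ c := by positivity
  have hR : 3 * m * r ≤ 4 * a ^ 2 := by
    have := (le_div_iff₀ (by positivity : (0:ℝ) < 3 * m)).1 hrR
    linarith
  -- key1 : slope bound
  have key1 : 4 * m * r - (8/3) * a ^ 2 * (1 + c) ≤ (8/3) * a ^ 2 * (1 - c) := by
    linarith
  have key2 : r * ((8/3) * a ^ 2 * (1 - c)) ≤ (4 * a ^ 2 / (3 * m)) * ((8/3) * a ^ 2 * (1 - c)) :=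
    mul_le_mul_of_nonneg_right hrR (by nlinarith)
  have key3 : (4 * a ^ 2 / (3 * m)) * ((8/3) * a ^ 2 * (1 - c)) < 4 * m * a ^ 2 := by
    rw [div_mul_eq_mul_div, div_lt_iff₀ (by positivity : (0:ℝ) < 3 * m)]
    nlinarith [mul_lt_mul_of_pos_right hmax ha2]
  have hq : 4 * m * r ^ 2 - (8/3) * a ^ 2 * (1 + c) * r - 4 * m * a ^ 2 < 0 := by
    have h1 : (4 * m * r - (8/3) * a ^ 2 * (1 + c)) * r ≤ ((8/3) * a ^ 2 * (1 - c)) * r :=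
      mul_le_mul_of_nonneg_right key1 hr.le
    nlinarith
  have := mul_neg_of_pos_of_neg (mul_pos hr hr) hq
  nlinarith [this]
end
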